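/- There exists an idempotent map prune : Tree → Tree (so prune(prune(Xt)) = prune(Xt) for every type tree Xt) such that: (i) for every type tree Xt there is a bijection between Path(Xt) and Path(prune(Xt)); and (ii) if Path(Xt) is inhabited, then every internal node of prune(Xt) is inhabited. -/

import Mathlib

/-- Dependent type trees: the empty tree and `X :: Xf` for a type `X` and a forest `Xf`. -/
inductive GTree : Type 1 where
  | nil : GTree
  | cons : (X : Type) → (X → GTree) → GTree

/-- Paths in a dependent type tree. -/
def GTree.Path : GTree → Type
  | .nil => PUnit
  | .cons X Xf => (x : X) × (Xf x).Path

/-- Every internal node of the tree is inhabited. -/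
def GTree.InhNodes : GTree → Prop
  | .nil => True
  | .cons X Xf => Nonempty X ∧ ∀ x, (Xf x).InhNodes

open Classical in
/-- The pruning map. -/
noncomputable def GTree.prune : GTree → GTree
  | .nil => .nil
  | .cons X Xf =>
    if Nonempty (GTree.cons X Xf).Path then
      if ∀ x, Nonempty (Xf x).Path then .cons X (fun x => (Xf x).prune)
      else .cons {x : X // Nonempty (Xf x).Path} (fun p => (Xf p.1).prune)
    else .cons Empty Empty.elim

theorem GTree.prune_equiv : ∀ t : GTree, Nonempty (t.Path ≃ t.prune.Path)
  | .nil => ⟨Equiv.refl _⟩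
  | .cons X Xf => by
    classical
    unfold prune
    split_ifs with h1 h2
    · exact ⟨Equiv.sigmaCongrRight fun x => (GTree.prune_equiv (Xf x)).some⟩
    · refine ⟨?_⟩
      have e : ∀ x : X, Nonempty ((Xf x).Path ≃ (Xf x).prune.Path) :=
        fun x => GTree.prune_equiv (Xf x)
      exact
        { toFun := fun q => ⟨⟨q.1, ⟨q.2⟩⟩, (e q.1).some q.2⟩
          invFun := fun q => ⟨q.1.1, (e q.1.1).some.symm q.2⟩
          left_inv := fun q => by simp; rfl
          right_inv := fun ⟨⟨x, hx⟩, q⟩ => by simp; rfl }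
    · have : IsEmpty (GTree.cons X Xf).Path := not_nonempty_iff.mp h1
      have : IsEmpty (GTree.cons Empty Empty.elim).Path :=
        ⟨fun q => q.1.elim⟩
      exact ⟨Equiv.equivOfIsEmpty _ _⟩

theorem GTree.prune_path_nonempty {t : GTree} :
    Nonempty t.prune.Path ↔ Nonempty t.Path := by
  rcases t.prune_equiv with ⟨e⟩
  exact ⟨fun ⟨q⟩ => ⟨e.symm q⟩, fun ⟨q⟩ => ⟨e q⟩⟩

theorem GTree.prune_idem : ∀ t : GTree, t.prune.prune = t.prune
  | .nil => rfl
  | .cons X Xf => by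
    classical
    rw [prune]
    split_ifs with h1 h2
    · rw [prune]
      have hne : Nonempty (GTree.cons X (fun x => (Xf x).prune)).Path := by
        obtain ⟨x, q⟩ := h1
        exact ⟨⟨x, ((Xf x).prune_equiv).some q⟩⟩
      rw [if_pos hne, if_pos (fun x => prune_path_nonempty.mpr (h2 x))]
      exact congrArg _ (funext fun x => GTree.prune_idem (Xf x))
    · rw [prune]
      have hne : Nonempty (GTree.cons {x : X // Nonempty (Xf x).Path}
          (fun p => (Xf p.1).prune)).Path := by
        obtain ⟨x, q⟩ := h1
        exact ⟨⟨⟨x, ⟨q⟩⟩, ((Xf x).prune_equiv).some q⟩⟩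
      rw [if_pos hne, if_pos (fun p => prune_path_nonempty.mpr p.2)]
      exact congrArg _ (funext fun p => GTree.prune_idem (Xf p.1))
    · rw [prune]
      have : ¬ Nonempty (GTree.cons Empty Empty.elim).Path :=
        fun ⟨q⟩ => q.1.elim
      rw [if_neg this]

theorem GTree.prune_inhNodes : ∀ t : GTree, Nonempty t.Path → t.prune.InhNodes
  | .nil, _ => trivial
  | .cons X Xf, h => by
    classical
    rw [prune, if_pos h]
    split_ifs with h2
    · obtain ⟨x, _⟩ := h
      exact ⟨⟨x⟩, fun x => GTree.prune_inhNodes (Xf x) (h2 x)⟩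
    · obtain ⟨x, q⟩ := h
      exact ⟨⟨⟨x, ⟨q⟩⟩⟩, fun p => GTree.prune_inhNodes (Xf p.1) p.2⟩

/-- There is an idempotent pruning map on type trees which preserves paths up to
bijection and, as soon as the tree has a path, yields a tree all of whose
internal nodes are inhabited. -/
theorem exists_prune :
    ∃ prune : GTree → GTree,
      (∀ t : GTree, prune (prune t) = prune t) ∧
      (∀ t : GTree, Nonempty (t.Path ≃ (prune t).Path)) ∧
      (∀ t : GTree, Nonempty t.Path → (prune t).InhNodes) := by
  exact ⟨GTree.prune, GTree.prune_idem, GTree.prune_equiv, GTree.prune_inhNodes⟩
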